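/- The regular path homology of the complete undirected graph K_n (viewed as the directed graph ρ(K_n) with both orientations of each edge) is concentrated in degree n−1, where it is free of rank D(n) = Σ_{j=0}^n (−1)^j n!/j!, the number of derangements of n elements. -/

import Mathlib

open scoped Classical

/-! ### Regular path homology -/

/-- The free module on all elementary `k`-paths (tuples of `k+1` vertices). -/
abbrev PathChain (V : Type) (k : ℕ) : Type := (Fin (k + 1) → V) →₀ ℤ

/-- The simplicial boundary: alternating sum of all vertex deletions. -/
noncomputable def pathD (V : Type) (k : ℕ) : PathChain V (k + 1) →ₗ[ℤ] PathChain V k :=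
  Finsupp.lift (PathChain V k) ℤ (Fin (k + 2) → V) fun x =>
    ∑ i : Fin (k + 2), ((-1 : ℤ) ^ (i : ℕ)) • Finsupp.single (x ∘ i.succAbove) 1

/-- Strongly regular allowed elementary paths: all vertices distinct, consecutive
vertices joined by a directed edge. -/
def sraSet {V : Type} (A : V → V → Prop) (k : ℕ) : Set (Fin (k + 1) → V) :=
  {x | Function.Injective x ∧ ∀ i : Fin k, A (x i.castSucc) (x i.succ)}

/-- The span of the strongly regular allowed elementary `k`-paths. -/
noncomputable def sraMod {V : Type} (A : V → V → Prop) (k : ℕ) :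
    Submodule ℤ (PathChain V k) :=
  Submodule.span ℤ ((fun x => Finsupp.single x (1 : ℤ)) '' sraSet A k)

/-- `Ω^ι_k`: the `∂`-invariant strongly regular allowed paths. -/
noncomputable def omegaI {V : Type} (A : V → V → Prop) (k : ℕ) :
    Submodule ℤ (PathChain V k) :=
  match k with
  | 0 => sraMod A 0
  | k + 1 => sraMod A (k + 1) ⊓ Submodule.comap (pathD V k) (sraMod A k)

/-- Cycles of the regular path chain complex. -/
noncomputable def rpZ {V : Type} (A : V → V → Prop) (k : ℕ) :
    Submodule ℤ (PathChain V k) :=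
  match k with
  | 0 => omegaI A 0
  | k + 1 => omegaI A (k + 1) ⊓ LinearMap.ker (pathD V k)

/-- Boundaries of the regular path chain complex. -/
noncomputable def rpB {V : Type} (A : V → V → Prop) (k : ℕ) :
    Submodule ℤ (PathChain V k) :=
  Submodule.map (pathD V k) (omegaI A (k + 1))

/-- Regular path homology of a directed graph. -/
noncomputable abbrev RPH {V : Type} (A : V → V → Prop) (k : ℕ) :=
  rpZ A k ⧸ Submodule.comap (rpZ A k).subtype (rpB A k)

/-! ### Homology of the complex of injective words on a digraph -/

/-- Simplices of the complex of injective words on the digraph `A`: tuples of pairwise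
distinct vertices, each later one reachable from each earlier one by a directed path. -/
def injGen {V : Type} (A : V → V → Prop) (k : ℕ) : Set (Fin (k + 1) → V) :=
  {x | Function.Injective x ∧
    ∀ i j : Fin (k + 1), i < j → Relation.ReflTransGen A (x i) (x j)}

/-- Chains of the complex of injective words. -/
abbrev IC {V : Type} (A : V → V → Prop) (k : ℕ) : Type := injGen A k →₀ ℤ

/-- Boundary: alternating sum of vertex deletions. -/
noncomputable def icD {V : Type} (A : V → V → Prop) (k : ℕ) :
    IC A (k + 1) →ₗ[ℤ] IC A k :=
  Finsupp.lift (IC A k) ℤ (injGen A (k + 1)) fun x =>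
    ∑ i : Fin (k + 2), ((-1 : ℤ) ^ (i : ℕ)) •
      (if h : ((x : Fin (k + 2) → V) ∘ i.succAbove) ∈ injGen A k then
        Finsupp.single ⟨_, h⟩ (1 : ℤ) else 0)

/-- Cycles of the complex of injective words. -/
noncomputable def icZ {V : Type} (A : V → V → Prop) (k : ℕ) : Submodule ℤ (IC A k) :=
  match k with
  | 0 => ⊤
  | k + 1 => LinearMap.ker (icD A k)

/-- Homology of the complex of injective words on the digraph `A`. -/
noncomputable abbrev InjH {V : Type} (A : V → V → Prop) (k : ℕ) :=
  icZ A k ⧸ Submodule.comap (icZ A k).subtype (LinearMap.range (icD A k))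

/-- The augmentation sending each vertex to `1`. -/
noncomputable def pathAug (V : Type) : PathChain V 0 →ₗ[ℤ] ℤ :=
  Finsupp.lift ℤ ℤ (Fin 1 → V) fun _ => (1 : ℤ)

/-- Cycles of the reduced (augmented) regular path chain complex. -/
noncomputable def redRpZ {V : Type} (A : V → V → Prop) (k : ℕ) :
    Submodule ℤ (PathChain V k) :=
  match k with
  | 0 => omegaI A 0 ⊓ LinearMap.ker (pathAug V)
  | k + 1 => rpZ A (k + 1)

/-- Reduced regular path homology of a directed graph. -/
noncomputable abbrev redRPH {V : Type} (A : V → V → Prop) (k : ℕ) :=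
  redRpZ A k ⧸ Submodule.comap (redRpZ A k).subtype (rpB A k)

/-- The number of derangeNum `D(n) = Σ_{j=0}^n (-1)^j n!/j!` (as an integer). -/
noncomputable def derangeNum (n : ℕ) : ℤ :=
  ∑ j ∈ Finset.range (n + 1), (-1 : ℤ) ^ j * ((n.factorial / j.factorial : ℕ) : ℤ)

namespace RPHAux

lemma succAbove_comm {n : ℕ} (i j : Fin (n + 2)) (H : i ≤ j) (k : Fin (n + 1)) :
    j.succ.succAbove (i.succAbove k) = i.castSucc.succAbove (j.succAbove k) := by
  rcases i with ⟨i, hi⟩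
  rcases j with ⟨j, hj⟩
  rcases k with ⟨k, hk⟩
  simp only [Fin.succAbove, Fin.lt_def, Fin.le_def, Fin.castSucc_mk, Fin.succ_mk,
    Fin.coe_castSucc, Fin.val_fin_lt] at *
  split_ifs <;> simp_all [Fin.castSucc, Fin.castAdd, Fin.castLE, Fin.succ, Fin.lt_def,
    Fin.ext_iff] <;> omega

lemma pathD_single {V : Type} {k : ℕ} (x : Fin (k + 2) → V) :
    pathD V k (Finsupp.single x 1) =
      ∑ i : Fin (k + 2), ((-1 : ℤ) ^ (i : ℕ)) • Finsupp.single (x ∘ i.succAbove) 1 := by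
  rw [pathD, Finsupp.lift_apply, Finsupp.sum_single_index] <;> simp

lemma succAbove_comm₁ {m : ℕ} (I : Fin (m + 3)) (j : Fin (m + 2)) (h : (I : ℕ) ≤ (j : ℕ))
    (l : Fin (m + 1)) :
    I.succAbove (j.succAbove l) =
      j.succ.succAbove ((⟨(I : ℕ), lt_of_le_of_lt h j.isLt⟩ : Fin (m + 2)).succAbove l) := by
  rcases I with ⟨I, hI⟩
  rcases j with ⟨j, hj⟩
  rcases l with ⟨l, hl⟩
  simp only [Fin.succAbove, Fin.lt_def, Fin.le_def, Fin.castSucc_mk, Fin.succ_mk,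
    Fin.coe_castSucc, Fin.val_fin_lt] at *
  split_ifs <;> simp_all [Fin.castSucc, Fin.castAdd, Fin.castLE, Fin.succ, Fin.lt_def,
    Fin.ext_iff] <;> omega

lemma succAbove_comm₂ {m : ℕ} (I : Fin (m + 3)) (j : Fin (m + 2)) (h : (j : ℕ) < (I : ℕ))
    (hne : I ≠ 0) (l : Fin (m + 1)) :
    I.succAbove (j.succAbove l) =
      (Fin.castSucc j).succAbove ((I.pred hne).succAbove l) := by
  rcases I with ⟨I, hI⟩
  rcases j with ⟨j, hj⟩
  rcases l with ⟨l, hl⟩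
  have hI0 : I ≠ 0 := by simpa [Fin.ext_iff] using hne
  simp only [Fin.succAbove, Fin.lt_def, Fin.le_def, Fin.castSucc_mk, Fin.succ_mk, Fin.pred,
    Fin.coe_castSucc, Fin.val_fin_lt] at *
  split_ifs <;> simp_all [Fin.castSucc, Fin.castAdd, Fin.castLE, Fin.succ, Fin.subNat,
    Fin.lt_def, Fin.ext_iff] <;> omega

noncomputable def sw {m : ℕ} (p : Fin (m + 3) × Fin (m + 2)) : Fin (m + 3) × Fin (m + 2) :=
  if h : (p.1 : ℕ) ≤ (p.2 : ℕ) then (p.2.succ, ⟨(p.1 : ℕ), lt_of_le_of_lt h p.2.isLt⟩)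
  else (p.2.castSucc, p.1.pred (fun h0 => h (by simp [h0])))

lemma sw_f_add {V : Type} {k : ℕ} (x : Fin (k + 3) → V)
    (p : Fin (k + 3) × Fin (k + 2)) :
    (((-1 : ℤ) ^ ((p.1 : ℕ) + (p.2 : ℕ))) •
        Finsupp.single ((x ∘ p.1.succAbove) ∘ p.2.succAbove) (1 : ℤ)) +
      (((-1 : ℤ) ^ (((sw p).1 : ℕ) + ((sw p).2 : ℕ))) •
        Finsupp.single ((x ∘ (sw p).1.succAbove) ∘ (sw p).2.succAbove) (1 : ℤ)) = 0 := by
  rcases p with ⟨I, J⟩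
  by_cases h : (I : ℕ) ≤ (J : ℕ)
  · have harg : ((x ∘ (sw (I, J)).1.succAbove) ∘ (sw (I, J)).2.succAbove : Fin (k + 1) → V)
        = (x ∘ I.succAbove) ∘ J.succAbove := by
      funext l
      simp only [sw, dif_pos h, Function.comp_apply]
      rw [← succAbove_comm₁ I J h l]
    have hsign : ((-1 : ℤ)) ^ (((sw (I, J)).1 : ℕ) + ((sw (I, J)).2 : ℕ)) =
        -((-1 : ℤ) ^ ((I : ℕ) + (J : ℕ))) := by
      have : ((sw (I, J)).1 : ℕ) = (J : ℕ) + 1 ∧ ((sw (I, J)).2 : ℕ) = (I : ℕ) := by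
        simp [sw, dif_pos h]
      rw [this.1, this.2, show (J : ℕ) + 1 + (I : ℕ) = ((I : ℕ) + (J : ℕ)) + 1 by omega,
        pow_succ]
      ring
    rw [harg, hsign, neg_smul, add_neg_cancel]
  · have hne : I ≠ 0 := fun h0 => h (by simp [h0])
    have hlt : (J : ℕ) < (I : ℕ) := by omega
    have harg : ((x ∘ (sw (I, J)).1.succAbove) ∘ (sw (I, J)).2.succAbove : Fin (k + 1) → V)
        = (x ∘ I.succAbove) ∘ J.succAbove := by
      funext l
      simp only [sw, dif_neg h, Function.comp_apply]
      rw [← succAbove_comm₂ I J hlt hne l]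
    have hsign : ((-1 : ℤ)) ^ (((sw (I, J)).1 : ℕ) + ((sw (I, J)).2 : ℕ)) =
        -((-1 : ℤ) ^ ((I : ℕ) + (J : ℕ))) := by
      have : ((sw (I, J)).1 : ℕ) = (J : ℕ) ∧ ((sw (I, J)).2 : ℕ) = (I : ℕ) - 1 := by
        simp [sw, dif_neg h]
      rw [this.1, this.2,
        show (I : ℕ) + (J : ℕ) = ((J : ℕ) + ((I : ℕ) - 1)) + 1 by omega, pow_succ]
      ring
    rw [harg, hsign, neg_smul, add_neg_cancel]

lemma sw_ne {m : ℕ} (p : Fin (m + 3) × Fin (m + 2)) : sw p ≠ p := by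
  rcases p with ⟨I, J⟩
  by_cases h : (I : ℕ) ≤ (J : ℕ) <;>
    [skip; skip] <;>
    · intro hc
      have := congrArg (fun q => (q.1 : ℕ)) hc
      simp [sw, h] at this
      omega

lemma sw_invol {m : ℕ} (p : Fin (m + 3) × Fin (m + 2)) : sw (sw p) = p := by
  rcases p with ⟨I, J⟩
  by_cases h : (I : ℕ) ≤ (J : ℕ)
  · have h1 : sw (I, J) = (J.succ, (⟨(I : ℕ), lt_of_le_of_lt h J.isLt⟩ : Fin (m + 2))) := by
      simp [sw, dif_pos h]
    rw [h1]
    have h2 : ¬ ((J.succ : ℕ) ≤ (I : ℕ)) := by simp [Fin.val_succ]; omega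
    simp only [sw, h2, dite_false, dif_neg]
    ext <;> simp [Fin.coe_pred, Fin.val_succ]
  · have hne : I ≠ 0 := fun h0 => h (by simp [h0])
    have h1 : sw (I, J) = (Fin.castSucc J, I.pred hne) := by
      simp only [sw, dif_neg h]
    rw [h1]
    have h2 : ((Fin.castSucc J : Fin (m + 3)) : ℕ) ≤ ((I.pred hne : Fin (m + 2)) : ℕ) := by
      simp [Fin.coe_pred]; omega
    simp only [sw, h2, dite_true, dif_pos]
    ext <;> simp [Fin.coe_pred, Fin.val_succ] <;> omega

lemma sum_f_zero {V : Type} {k : ℕ} (x : Fin (k + 3) → V) :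
    ∑ p : Fin (k + 3) × Fin (k + 2),
      (((-1 : ℤ) ^ ((p.1 : ℕ) + (p.2 : ℕ))) •
        Finsupp.single ((x ∘ p.1.succAbove) ∘ p.2.succAbove) (1 : ℤ)) = 0 :=
  Finset.sum_involution (fun p _ => sw p) (fun p _ => sw_f_add x p)
    (fun p _ _ => sw_ne p) (fun p _ => Finset.mem_univ _) (fun p _ => sw_invol p)

lemma dd_single {V : Type} {k : ℕ} (x : Fin (k + 3) → V) :
    pathD V k (pathD V (k + 1) (Finsupp.single x 1)) = 0 := by
  rw [pathD_single, map_sum]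
  simp only [LinearMap.map_smul, pathD_single, Finset.smul_sum]
  rw [← Finset.sum_product', Finset.univ_product_univ]
  simp only [smul_smul, ← pow_add]
  exact sum_f_zero x

lemma dd_zero {V : Type} {k : ℕ} (c : PathChain V (k + 2)) :
    pathD V k (pathD V (k + 1) c) = 0 := by
  have : (pathD V k).comp (pathD V (k + 1)) = 0 := by
    apply Finsupp.lhom_ext'
    intro x
    apply LinearMap.ext
    intro b
    have : (Finsupp.single x b : PathChain V (k + 2)) = b • Finsupp.single x 1 := by
      simp [Finsupp.smul_single]
    simp only [LinearMap.comp_apply, Finsupp.lsingle_apply, LinearMap.zero_apply, this,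
      map_smul, dd_single, smul_zero]
  exact LinearMap.congr_fun this c

/-- prepend a letter `a` to each word avoiding `a`. -/
noncomputable def sCons {V : Type} (a : V) (k : ℕ) :
    PathChain V k →ₗ[ℤ] PathChain V (k + 1) :=
  Finsupp.lift (PathChain V (k + 1)) ℤ (Fin (k + 1) → V) fun x =>
    if a ∈ Set.range x then 0 else Finsupp.single (Fin.cons a x) 1

lemma sCons_single {V : Type} (a : V) {k : ℕ} (x : Fin (k + 1) → V) :
    sCons a k (Finsupp.single x 1) =
      if a ∈ Set.range x then 0 else Finsupp.single (Fin.cons a x) 1 := by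
  rw [sCons, Finsupp.lift_apply, Finsupp.sum_single_index] <;> simp

lemma cons_comp_zero {V : Type} (a : V) {k : ℕ} (x : Fin (k + 1) → V) :
    (Fin.cons a x : Fin (k + 2) → V) ∘ (Fin.succAbove 0) = x := by
  funext l
  simp [Fin.succAbove_zero]

lemma cons_comp_succ {V : Type} (a : V) {k : ℕ} (x : Fin (k + 2) → V) (i : Fin (k + 2)) :
    (Fin.cons a x : Fin (k + 3) → V) ∘ (Fin.succAbove i.succ)
      = Fin.cons a (x ∘ i.succAbove) := by
  funext l
  induction l using Fin.cases with
  | zero => simp [Fin.succ_succAbove_zero]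
  | succ m => simp [Fin.succ_succAbove_succ]

/-- homotopy identity, case `a ∉ range x`. -/
lemma homotopy_notMem {V : Type} (a : V) {k : ℕ} (x : Fin (k + 2) → V)
    (ha : a ∉ Set.range x) :
    pathD V (k + 1) (sCons a (k + 1) (Finsupp.single x 1))
      + sCons a k (pathD V k (Finsupp.single x 1)) = Finsupp.single x 1 := by
  rw [sCons_single, if_neg ha, pathD_single, pathD_single, map_sum]
  rw [Fin.sum_univ_succ]
  simp only [Fin.val_zero, pow_zero, one_smul, cons_comp_zero, Fin.val_succ,
    LinearMap.map_smul, sCons_single]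
  have hnot : ∀ i : Fin (k + 2), a ∉ Set.range (x ∘ i.succAbove) := by
    intro i hmem
    exact ha (by rcases hmem with ⟨l, hl⟩; exact ⟨i.succAbove l, hl⟩)
  have h1 : ∀ i : Fin (k + 2),
      ((-1 : ℤ) ^ ((i : ℕ) + 1)) • Finsupp.single ((Fin.cons a x : Fin (k + 3) → V) ∘ (Fin.succAbove i.succ)) (1 : ℤ)
        = -(((-1 : ℤ) ^ (i : ℕ)) • Finsupp.single (Fin.cons a (x ∘ i.succAbove) : Fin (k + 2) → V) (1 : ℤ)) := by
    intro i
    rw [cons_comp_succ, pow_succ]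
    simp [neg_smul, mul_comm]
  simp only [h1]
  have h2 : ∀ i : Fin (k + 2),
      ((-1 : ℤ) ^ (i : ℕ)) • (if a ∈ Set.range (x ∘ i.succAbove) then 0 else
          Finsupp.single (Fin.cons a (x ∘ i.succAbove) : Fin (k + 2) → V) (1 : ℤ))
        = ((-1 : ℤ) ^ (i : ℕ)) • Finsupp.single (Fin.cons a (x ∘ i.succAbove) : Fin (k + 2) → V) (1 : ℤ) := by
    intro i; rw [if_neg (hnot i)]
  simp only [h2]
  rw [Finset.sum_neg_distrib, add_assoc, neg_add_cancel, add_zero]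

/-- homotopy identity, case `x p = a`, `x` injective. -/
lemma homotopy_mem {V : Type} (a : V) {k : ℕ} (x : Fin (k + 2) → V)
    (hx : Function.Injective x) (p : Fin (k + 2)) (hp : x p = a) :
    pathD V (k + 1) (sCons a (k + 1) (Finsupp.single x 1))
      + sCons a k (pathD V k (Finsupp.single x 1))
      = ((-1 : ℤ) ^ (p : ℕ)) • Finsupp.single (Fin.cons a (x ∘ p.succAbove)) 1 := by
  rw [sCons_single, if_pos ⟨p, hp⟩, map_zero, zero_add, pathD_single, map_sum]
  simp only [LinearMap.map_smul, sCons_single]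
  rw [Finset.sum_eq_single p]
  · rw [if_neg]
    intro hmem
    rcases hmem with ⟨l, hl⟩
    have : x (p.succAbove l) = x p := by rw [hp]; exact hl
    exact Fin.succAbove_ne p l (hx this)
  · intro i _ hne
    rw [if_pos, smul_zero]
    have : p ∈ Set.range i.succAbove := by
      rw [Fin.range_succAbove]
      exact hne.symm
    rcases this with ⟨l, hl⟩
    exact ⟨l, by rw [Function.comp_apply, hl, hp]⟩
  · intro h
    exact absurd (Finset.mem_univ p) h

/-- injective words whose range contains all of `T`. -/
def Good {V : Type} (T : Finset V) (k : ℕ) : Set (Fin (k + 1) → V) :=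
  {x | Function.Injective x ∧ ∀ b ∈ T, b ∈ Set.range x}

lemma apply_mem_of_mem_span {M N : Type} [AddCommGroup M] [AddCommGroup N]
    [Module ℤ M] [Module ℤ N] (f : M →ₗ[ℤ] N) {s : Set M} {q : Submodule ℤ N}
    (h : ∀ m ∈ s, f m ∈ q) {c : M} (hc : c ∈ Submodule.span ℤ s) : f c ∈ q := by
  have : Submodule.map f (Submodule.span ℤ s) ≤ q := by
    rw [Submodule.map_span, Submodule.span_le]
    rintro y ⟨m, hm, rfl⟩
    exact h m hm
  exact this ⟨c, hc, rfl⟩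

lemma mem_span_of_supported {V : Type} {k : ℕ} {s : Set (Fin (k + 1) → V)}
    {c : PathChain V k} (hc : c ∈ Finsupp.supported ℤ ℤ s) :
    c ∈ Submodule.span ℤ ((fun x => Finsupp.single x (1 : ℤ)) '' s) := by
  rwa [← Finsupp.supported_eq_span_single]

lemma pathD_mem_supported {V : Type} {k : ℕ} {c : PathChain V (k + 1)}
    (hc : c ∈ Finsupp.supported ℤ ℤ (Good (∅ : Finset V) (k + 1))) :
    pathD V k c ∈ Finsupp.supported ℤ ℤ (Good (∅ : Finset V) k) := by
  refine apply_mem_of_mem_span (pathD V k) ?_ (mem_span_of_supported hc)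
  rintro m ⟨x, hx, rfl⟩
  rw [pathD_single]
  refine Submodule.sum_mem _ fun i _ => Submodule.smul_mem _ _ ?_
  exact Finsupp.single_mem_supported ℤ 1
    ⟨hx.1.comp Fin.succAbove_right_injective, by simp⟩

lemma sCons_mem_supported {V : Type} (a : V) {k : ℕ} {c : PathChain V k}
    (hc : c ∈ Finsupp.supported ℤ ℤ (Good (∅ : Finset V) k)) :
    sCons a k c ∈ Finsupp.supported ℤ ℤ (Good (∅ : Finset V) (k + 1)) := by
  refine apply_mem_of_mem_span (sCons a k) ?_ (mem_span_of_supported hc)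
  rintro m ⟨x, hx, rfl⟩
  rw [sCons_single]
  split_ifs with h
  · exact zero_mem _
  · exact Finsupp.single_mem_supported ℤ 1
      ⟨Fin.cons_injective_of_injective h hx.1, by simp⟩

lemma reduce_step {V : Type} [DecidableEq V] (a : V) {k : ℕ} (T : Finset V) (e : PathChain V (k + 1))
    (he : e ∈ Finsupp.supported ℤ ℤ (Good T (k + 1)))
    (hz : pathD V k e = 0) :
    e - pathD V (k + 1) (sCons a (k + 1) e)
      ∈ Finsupp.supported ℤ ℤ (Good (insert a T) (k + 1)) := by
  have hrw : e - pathD V (k + 1) (sCons a (k + 1) e)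
      = ((LinearMap.id : PathChain V (k + 1) →ₗ[ℤ] PathChain V (k + 1))
          - (pathD V (k + 1)).comp (sCons a (k + 1))
          - (sCons a k).comp (pathD V k)) e := by
    simp [LinearMap.sub_apply, LinearMap.comp_apply, hz]
  rw [hrw]
  refine apply_mem_of_mem_span _ ?_ (mem_span_of_supported he)
  rintro m ⟨x, hx, rfl⟩
  simp only [LinearMap.sub_apply, LinearMap.id_apply, LinearMap.comp_apply]
  by_cases hmem : a ∈ Set.range x
  · obtain ⟨p, hp⟩ := hmem
    have hid := homotopy_mem a x hx.1 p hp
    have : (Finsupp.single x 1 : PathChain V (k + 1))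
        - pathD V (k + 1) (sCons a (k + 1) (Finsupp.single x 1))
        - sCons a k (pathD V k (Finsupp.single x 1))
        = Finsupp.single x 1
          - ((-1 : ℤ) ^ (p : ℕ)) • Finsupp.single (Fin.cons a (x ∘ p.succAbove)) 1 := by
      rw [sub_sub, hid]
    rw [this]
    refine sub_mem ?_ (Submodule.smul_mem _ _ ?_)
    · refine Finsupp.single_mem_supported ℤ 1 ⟨hx.1, ?_⟩
      intro b hb
      rcases Finset.mem_insert.mp hb with rfl | hb
      · exact ⟨p, hp⟩
      · exact hx.2 b hb
    · refine Finsupp.single_mem_supported ℤ 1 ⟨?_, ?_⟩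
      · refine Fin.cons_injective_of_injective ?_ (hx.1.comp Fin.succAbove_right_injective)
        rintro ⟨l, hl⟩
        have : x (p.succAbove l) = x p := by rw [hp]; exact hl
        exact Fin.succAbove_ne p l (hx.1 this)
      · intro b hb
        rcases Finset.mem_insert.mp hb with rfl | hb
        · exact ⟨0, rfl⟩
        · obtain ⟨q, hq⟩ := hx.2 b hb
          by_cases hqp : q = p
          · exact ⟨0, by rw [hqp] at hq; rw [← hq, hp]; rfl⟩
          · have : q ∈ Set.range p.succAbove := by
              rw [Fin.range_succAbove]; exact hqp
            obtain ⟨l, hl⟩ := this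
            exact ⟨l.succ, by simp [Fin.cons_succ, Function.comp_apply, hl, hq]⟩
  · have hid := homotopy_notMem a x hmem
    have : (Finsupp.single x 1 : PathChain V (k + 1))
        - pathD V (k + 1) (sCons a (k + 1) (Finsupp.single x 1))
        - sCons a k (pathD V k (Finsupp.single x 1)) = 0 := by
      rw [sub_sub, hid, sub_self]
    rw [this]
    exact zero_mem _

lemma reduce_all {n k : ℕ} (T : Finset (Fin n)) (c : PathChain (Fin n) (k + 1))
    (hc : c ∈ Finsupp.supported ℤ ℤ (Good (∅ : Finset (Fin n)) (k + 1)))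
    (hz : pathD (Fin n) k c = 0) :
    ∃ d ∈ Finsupp.supported ℤ ℤ (Good (∅ : Finset (Fin n)) (k + 2)),
      c - pathD (Fin n) (k + 1) d ∈ Finsupp.supported ℤ ℤ (Good T (k + 1)) := by
  induction T using Finset.induction_on with
  | empty =>
    refine ⟨0, zero_mem _, ?_⟩
    simpa using hc
  | @insert a T ha ih =>
    obtain ⟨d, hd, he⟩ := ih
    set e := c - pathD (Fin n) (k + 1) d with hedef
    have hez : pathD (Fin n) k e = 0 := by
      rw [hedef, map_sub, hz, dd_zero, sub_zero]
    have he0 : e ∈ Finsupp.supported ℤ ℤ (Good (∅ : Finset (Fin n)) (k + 1)) :=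
      Finsupp.supported_mono (by intro x hx; exact ⟨hx.1, by simp⟩) he
    refine ⟨d + sCons a (k + 1) e, add_mem hd (sCons_mem_supported a he0), ?_⟩
    have : c - pathD (Fin n) (k + 1) (d + sCons a (k + 1) e)
        = e - pathD (Fin n) (k + 1) (sCons a (k + 1) e) := by
      rw [map_add, hedef]; abel
    rw [this]
    exact reduce_step a T e he hez

lemma good_univ_empty {n k : ℕ} (h : k + 2 < n) :
    Good (Finset.univ : Finset (Fin n)) (k + 1) = ∅ := by
  ext x
  simp only [Good, Set.mem_setOf_eq, Set.mem_empty_iff_false, iff_false, not_and]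
  intro _ hall
  have hsurj : Function.Surjective x := fun b => hall b (Finset.mem_univ b)
  have := Fintype.card_le_of_surjective x hsurj
  simp at this
  omega

lemma acyclic {n k : ℕ} (h : k + 2 < n) (c : PathChain (Fin n) (k + 1))
    (hc : c ∈ Finsupp.supported ℤ ℤ (Good (∅ : Finset (Fin n)) (k + 1)))
    (hz : pathD (Fin n) k c = 0) :
    ∃ d ∈ Finsupp.supported ℤ ℤ (Good (∅ : Finset (Fin n)) (k + 2)),
      pathD (Fin n) (k + 1) d = c := by
  obtain ⟨d, hd, he⟩ := reduce_all Finset.univ c hc hz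
  rw [good_univ_empty h, Finsupp.supported_empty, Submodule.mem_bot, sub_eq_zero] at he
  exact ⟨d, hd, he.symm⟩


/-! ### Identification of the regular path complex of the complete graph -/

lemma sraSet_ne (n k : ℕ) :
    sraSet (fun x y : Fin n => x ≠ y) k = Good (∅ : Finset (Fin n)) k := by
  ext x
  constructor
  · rintro ⟨h1, -⟩
    exact ⟨h1, by simp⟩
  · rintro ⟨h1, -⟩
    refine ⟨h1, fun i heq => ?_⟩
    have := h1 heq
    exact absurd this (Fin.ne_of_lt (Fin.castSucc_lt_succ (i := i)))

lemma sraMod_ne (n k : ℕ) :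
    sraMod (fun x y : Fin n => x ≠ y) k
      = Finsupp.supported ℤ ℤ (Good (∅ : Finset (Fin n)) k) := by
  rw [sraMod, sraSet_ne, Finsupp.supported_eq_span_single]

lemma omegaI_ne (n k : ℕ) :
    omegaI (fun x y : Fin n => x ≠ y) k
      = Finsupp.supported ℤ ℤ (Good (∅ : Finset (Fin n)) k) := by
  cases k with
  | zero => rw [omegaI, sraMod_ne]
  | succ k =>
    show sraMod _ (k + 1) ⊓ Submodule.comap (pathD (Fin n) k) (sraMod _ k) = _
    rw [sraMod_ne, sraMod_ne]
    refine inf_eq_left.mpr fun c hc => ?_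
    exact pathD_mem_supported hc

lemma supported_bot {n k : ℕ} (h : n ≤ k) :
    Finsupp.supported ℤ ℤ (Good (∅ : Finset (Fin n)) k) = (⊥ : Submodule ℤ (PathChain (Fin n) k)) := by
  have : Good (∅ : Finset (Fin n)) k = ∅ := by
    ext x
    simp only [Good, Set.mem_setOf_eq, Set.mem_empty_iff_false, iff_false, not_and]
    intro hinj
    have := Fintype.card_le_of_injective x hinj
    simp at this
    omega
  rw [this, Finsupp.supported_empty]

lemma rpB_ne (n k : ℕ) :
    rpB (fun x y : Fin n => x ≠ y) k
      = Submodule.map (pathD (Fin n) k)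
          (Finsupp.supported ℤ ℤ (Good (∅ : Finset (Fin n)) (k + 1))) := by
  rw [rpB, omegaI_ne]

lemma redRpZ_ne_succ (n k : ℕ) :
    redRpZ (fun x y : Fin n => x ≠ y) (k + 1)
      = Finsupp.supported ℤ ℤ (Good (∅ : Finset (Fin n)) (k + 1))
          ⊓ LinearMap.ker (pathD (Fin n) k) := by
  show rpZ _ (k + 1) = _
  show omegaI _ (k + 1) ⊓ LinearMap.ker (pathD (Fin n) k) = _
  rw [omegaI_ne]

lemma redRpZ_ne_zero (n : ℕ) :
    redRpZ (fun x y : Fin n => x ≠ y) 0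
      = Finsupp.supported ℤ ℤ (Good (∅ : Finset (Fin n)) 0)
          ⊓ LinearMap.ker (pathAug (Fin n)) := by
  show omegaI _ 0 ⊓ _ = _
  rw [omegaI_ne]

lemma pathAug_single {V : Type} (x : Fin 1 → V) (c : ℤ) :
    pathAug V (Finsupp.single x c) = c := by
  rw [pathAug, Finsupp.lift_apply, Finsupp.sum_single_index] <;> simp

lemma good_zero_univ {n : ℕ} : Good (∅ : Finset (Fin n)) 0 = Set.univ := by
  ext x
  simp only [Good, Set.mem_setOf_eq, Set.mem_univ, iff_true]
  refine ⟨fun i j _ => ?_, by simp⟩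
  have h1 := i.isLt
  have h2 := j.isLt
  exact Fin.ext (by omega)

/-- degree 0 acyclicity: reduced cycles bound. -/
lemma acyc_zero {n : ℕ} (a : Fin n) (c : PathChain (Fin n) 0)
    (hc : pathAug (Fin n) c = 0) :
    ∃ d ∈ Finsupp.supported ℤ ℤ (Good (∅ : Finset (Fin n)) 1),
      pathD (Fin n) 0 d = c := by
  refine ⟨sCons a 0 c, ?_, ?_⟩
  · refine sCons_mem_supported a ?_
    rw [good_zero_univ, Finsupp.supported_univ]
    exact Submodule.mem_top
  · set u : PathChain (Fin n) 0 := Finsupp.single (fun _ => a) 1 with hu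
    have key : ∀ x : Fin 1 → Fin n,
        pathD (Fin n) 0 (sCons a 0 (Finsupp.single x 1)) = Finsupp.single x 1 - u := by
      intro x
      rw [sCons_single]
      by_cases h : a ∈ Set.range x
      · have hx : x = fun _ => a := by
          funext l
          obtain ⟨l', hl'⟩ := h
          rw [Subsingleton.elim l l', hl']
        rw [if_pos h, map_zero, hx, hu, sub_self]
      · rw [if_neg h, pathD_single, Fin.sum_univ_two]
        have h0 : (Fin.cons a x : Fin 2 → Fin n) ∘ (Fin.succAbove 0) = x :=
          cons_comp_zero a x
        have h1 : (Fin.cons a x : Fin 2 → Fin n) ∘ (Fin.succAbove 1) = fun _ => a := by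
          funext l
          have : (1 : Fin 2).succAbove l = 0 := by
            rw [Subsingleton.elim l 0]; decide
          simp [Function.comp_apply, this]
        rw [h0, h1]
        simp [hu, sub_eq_add_neg]
    have main : ∀ c : PathChain (Fin n) 0,
        pathD (Fin n) 0 (sCons a 0 c) = c - (pathAug (Fin n) c) • u := by
      intro c
      induction c using Finsupp.induction_linear with
      | zero => simp
      | add f g hf hg =>
        rw [map_add, map_add, hf, hg, map_add]
        push_cast
        module
      | single x b =>
        have hb : (Finsupp.single x b : PathChain (Fin n) 0)
            = b • Finsupp.single x 1 := by simp
        rw [hb, map_smul, map_smul, key, map_smul, pathAug_single]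
        simp [smul_sub]
    rw [main c, hc]
    simp

lemma aug_pathD {V : Type} (c : PathChain V 1) :
    pathAug V (pathD V 0 c) = 0 := by
  have : (pathAug V).comp (pathD V 0) = 0 := by
    apply Finsupp.lhom_ext'
    intro x
    apply LinearMap.ext
    intro b
    have hb : (Finsupp.single x b : PathChain V 1) = b • Finsupp.single x 1 := by simp
    simp only [LinearMap.comp_apply, Finsupp.lsingle_apply, LinearMap.zero_apply, hb,
      map_smul]
    rw [pathD_single, Fin.sum_univ_two, map_add]
    simp only [map_smul, pathAug_single]
    simp
  exact LinearMap.congr_fun this c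

/-! ### Ranks -/

lemma finrank_supported_good (n k : ℕ) :
    Module.finrank ℤ ↥(Finsupp.supported ℤ ℤ (Good (∅ : Finset (Fin n)) k))
      = n.descFactorial (k + 1) := by
  haveI : Fintype ↥(Good (∅ : Finset (Fin n)) k) := Fintype.ofFinite _
  rw [(Finsupp.supportedEquivFinsupp (M := ℤ) (R := ℤ)
    (Good (∅ : Finset (Fin n)) k)).finrank_eq, Module.finrank_finsupp_self]
  have e1 : ↥(Good (∅ : Finset (Fin n)) k)
      ≃ {f : Fin (k + 1) → Fin n // Function.Injective f} :=
    Equiv.subtypeEquivRight (by intro x; simp [Good])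
  have e2 := Equiv.subtypeInjectiveEquivEmbedding (Fin (k + 1)) (Fin n)
  rw [Fintype.card_congr (e1.trans e2), Fintype.card_embedding_eq]
  simp

/-- rank–nullity for the restriction of a linear map to a submodule. -/
lemma rank_nullity_submodule {R M N : Type} [CommRing R] [IsDomain R]
    [StrongRankCondition R] [IsNoetherianRing R] [AddCommGroup M] [AddCommGroup N]
    [Module R M] [Module R N] [Module.Finite R M] (f : M →ₗ[R] N)
    (p : Submodule R M) :
    Module.finrank R ↥p
      = Module.finrank R ↥(Submodule.map f p)
        + Module.finrank R ↥(p ⊓ LinearMap.ker f) := by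
  haveI : IsNoetherian R M := isNoetherian_of_isNoetherianRing_of_finite R M
  haveI : Module.Finite R ↥p := Module.Finite.iff_fg.mpr (IsNoetherian.noetherian p)
  haveI : Module.Finite R ↥(p ⊓ LinearMap.ker f) :=
    Module.Finite.iff_fg.mpr (IsNoetherian.noetherian _)
  have h := LinearMap.rank_range_add_rank_ker (f.domRestrict p)
  haveI : Module.Finite R ↥(LinearMap.range (f.domRestrict p)) :=
    Module.Finite.range (f.domRestrict p)
  haveI : Module.Finite R ↥(Submodule.map f p) := by
    rw [← LinearMap.range_domRestrict]; infer_instance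
  rw [LinearMap.range_domRestrict] at h
  have e : ↥(LinearMap.ker (f.domRestrict p)) ≃ₗ[R] ↥(p ⊓ LinearMap.ker f) :=
    { toFun := fun x => ⟨x.1.1, x.1.2, LinearMap.mem_ker.mp x.2⟩
      invFun := fun y => ⟨⟨y.1, y.2.1⟩, LinearMap.mem_ker.mpr y.2.2⟩
      map_add' := fun x y => rfl
      map_smul' := fun c x => rfl
      left_inv := fun x => rfl
      right_inv := fun y => rfl }
  rw [e.rank_eq] at h
  rw [← Module.finrank_eq_rank R, ← Module.finrank_eq_rank R, ← Module.finrank_eq_rank R] at h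
  exact_mod_cast h.symm



lemma rpB_le_redRpZ_succ (n k : ℕ) :
    rpB (fun x y : Fin n => x ≠ y) (k + 1) ≤ redRpZ (fun x y : Fin n => x ≠ y) (k + 1) := by
  rw [rpB_ne, redRpZ_ne_succ]
  rintro c ⟨d, hd, rfl⟩
  exact ⟨pathD_mem_supported hd, by simp [LinearMap.mem_ker, dd_zero]⟩

lemma rpB_le_redRpZ_zero (n : ℕ) :
    rpB (fun x y : Fin n => x ≠ y) 0 ≤ redRpZ (fun x y : Fin n => x ≠ y) 0 := by
  rw [rpB_ne, redRpZ_ne_zero]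
  rintro c ⟨d, hd, rfl⟩
  exact ⟨pathD_mem_supported hd, by simp [LinearMap.mem_ker, aug_pathD]⟩

lemma redRpZ_le_rpB_zero (n : ℕ) (a : Fin n) :
    redRpZ (fun x y : Fin n => x ≠ y) 0 ≤ rpB (fun x y : Fin n => x ≠ y) 0 := by
  rw [rpB_ne, redRpZ_ne_zero]
  rintro c ⟨-, hker⟩
  obtain ⟨d, hd, hdc⟩ := acyc_zero a c hker
  exact ⟨d, hd, hdc⟩

lemma redRpZ_le_rpB_succ (n k : ℕ) (h : k + 2 < n) :
    redRpZ (fun x y : Fin n => x ≠ y) (k + 1) ≤ rpB (fun x y : Fin n => x ≠ y) (k + 1) := by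
  rw [rpB_ne, redRpZ_ne_succ]
  rintro c ⟨hsup, hker⟩
  obtain ⟨d, hd, hdc⟩ := acyclic h c hsup (LinearMap.mem_ker.mp hker)
  exact ⟨d, hd, hdc⟩

end RPHAux

/-- the (reduced) regular path homology of the complete graph `K_n`
(with both orientations of each edge) is concentrated in degree `n-1`, where it is free
of rank `D(n)`, the number of derangeNum of `n` elements. -/
theorem rph_complete_graph (n : ℕ) (hn : 1 ≤ n) :
    (∀ k : ℕ, k ≠ n - 1 →
      Subsingleton (redRPH (fun x y : Fin n => x ≠ y) k)) ∧
    Module.Free ℤ (redRPH (fun x y : Fin n => x ≠ y) (n - 1)) ∧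
    (Module.finrank ℤ (redRPH (fun x y : Fin n => x ≠ y) (n - 1)) : ℤ) =
      derangeNum n := by
  classical
  obtain ⟨m, rfl⟩ : ∃ m, n = m + 1 := ⟨n - 1, by omega⟩
  have hm1 : m + 1 - 1 = m := by omega
  rw [hm1]
  open RPHAux in
  have hz0 : (m + 1 : ℕ)
      = 1 + Module.finrank ℤ ↥(redRpZ (fun x y : Fin (m + 1) => x ≠ y) 0) := by
    have h := rank_nullity_submodule (pathAug (Fin (m + 1)))
      (Finsupp.supported ℤ ℤ (Good (∅ : Finset (Fin (m + 1))) 0))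
    rw [finrank_supported_good] at h
    have htop : Submodule.map (pathAug (Fin (m + 1)))
        (Finsupp.supported ℤ ℤ (Good (∅ : Finset (Fin (m + 1))) 0)) = ⊤ := by
      rw [Ideal.eq_top_iff_one]
      refine ⟨Finsupp.single (fun _ => (0 : Fin (m + 1))) 1, ?_, ?_⟩
      · exact Finsupp.single_mem_supported ℤ 1 (by rw [good_zero_univ]; trivial)
      · exact pathAug_single _ 1
    rw [htop, finrank_top, Module.finrank_self, ← redRpZ_ne_zero] at h
    simpa [Nat.descFactorial] using h
  have hstep : ∀ k : ℕ, (m + 1).descFactorial (k + 2)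
      = Module.finrank ℤ ↥(rpB (fun x y : Fin (m + 1) => x ≠ y) k)
        + Module.finrank ℤ ↥(redRpZ (fun x y : Fin (m + 1) => x ≠ y) (k + 1)) := by
    intro k
    have h := rank_nullity_submodule (pathD (Fin (m + 1)) k)
      (Finsupp.supported ℤ ℤ (Good (∅ : Finset (Fin (m + 1))) (k + 1)))
    rw [finrank_supported_good, ← rpB_ne, ← redRpZ_ne_succ] at h
    exact h
  have heqB : ∀ k : ℕ, k + 1 ≤ m → rpB (fun x y : Fin (m + 1) => x ≠ y) k
      = redRpZ (fun x y : Fin (m + 1) => x ≠ y) k := by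
    intro k hk
    cases k with
    | zero => exact le_antisymm (rpB_le_redRpZ_zero (m + 1)) (redRpZ_le_rpB_zero (m + 1) 0)
    | succ j =>
      exact le_antisymm (rpB_le_redRpZ_succ (m + 1) j)
        (redRpZ_le_rpB_succ (m + 1) j (by omega))
  have hind : ∀ k : ℕ, k ≤ m →
      (Module.finrank ℤ ↥(redRpZ (fun x y : Fin (m + 1) => x ≠ y) k) : ℤ)
        = (∑ j ∈ Finset.range (k + 1),
            (-1 : ℤ) ^ j * (((m + 1).factorial / (m - k + j).factorial : ℕ) : ℤ))
          - (-1 : ℤ) ^ k := by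
    intro k
    induction k with
    | zero =>
      intro _
      have hfac : (m + 1).factorial / (m - 0 + 0).factorial = m + 1 := by
        rw [show m - 0 + 0 = m by omega, Nat.factorial_succ,
          Nat.mul_div_cancel _ (Nat.factorial_pos _)]
      rw [Finset.sum_range_one, hfac]
      have hv : Module.finrank ℤ ↥(redRpZ (fun x y : Fin (m + 1) => x ≠ y) 0) = m := by
        omega
      rw [hv]
      push_cast
      ring
    | succ k ih =>
      intro hk
      have ihv := ih (by omega)
      have hs := hstep k
      rw [heqB k (by omega)] at hs
      have hzv : (Module.finrank ℤ ↥(redRpZ (fun x y : Fin (m + 1) => x ≠ y) (k + 1)) : ℤ)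
          = ((m + 1).descFactorial (k + 2) : ℤ)
            - (Module.finrank ℤ ↥(redRpZ (fun x y : Fin (m + 1) => x ≠ y) k) : ℤ) := by
        have := congrArg (fun t : ℕ => (t : ℤ)) hs
        push_cast at this
        linarith
      rw [hzv, ihv]
      have hdesc : (((m + 1).descFactorial (k + 2)) : ℤ)
          = (((m + 1).factorial / (m - (k + 1) + 0).factorial : ℕ) : ℤ) := by
        rw [Nat.descFactorial_eq_div (by omega : k + 2 ≤ m + 1),
          show m + 1 - (k + 2) = m - (k + 1) + 0 by omega]
      have hshift : ∀ j ∈ Finset.range (k + 1),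
          (-1 : ℤ) ^ (j + 1) * (((m + 1).factorial / (m - (k + 1) + (j + 1)).factorial : ℕ) : ℤ)
            = -((-1 : ℤ) ^ j * (((m + 1).factorial / (m - k + j).factorial : ℕ) : ℤ)) := by
        intro j hj
        rw [show m - (k + 1) + (j + 1) = m - k + j by omega, pow_succ]
        ring
      conv_rhs => rw [Finset.sum_range_succ']
      rw [Finset.sum_congr rfl hshift, Finset.sum_neg_distrib, hdesc]
      ring
  have hzm : (Module.finrank ℤ ↥(redRpZ (fun x y : Fin (m + 1) => x ≠ y) m) : ℤ)
      = derangeNum (m + 1) := by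
    rw [hind m le_rfl, derangeNum]
    conv_rhs => rw [Finset.sum_range_succ]
    have h1 : ∀ j ∈ Finset.range (m + 1),
        (-1 : ℤ) ^ j * (((m + 1).factorial / (m - m + j).factorial : ℕ) : ℤ)
          = (-1 : ℤ) ^ j * (((m + 1).factorial / j.factorial : ℕ) : ℤ) := by
      intro j hj
      rw [show m - m + j = j by omega]
    rw [Finset.sum_congr rfl h1,
      Nat.div_self (Nat.factorial_pos (m + 1))]
    push_cast
    ring
  have hbot : rpB (fun x y : Fin (m + 1) => x ≠ y) m = ⊥ := by
    rw [rpB_ne, supported_bot (by omega), Submodule.map_bot]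
  have hcomap : Submodule.comap (redRpZ (fun x y : Fin (m + 1) => x ≠ y) m).subtype
      (rpB (fun x y : Fin (m + 1) => x ≠ y) m) = ⊥ := by
    rw [hbot, Submodule.comap_bot, Submodule.ker_subtype]
  have equiv := Submodule.quotEquivOfEqBot _ hcomap
  refine ⟨?_, ?_, ?_⟩
  · intro k hk
    have hle : redRpZ (fun x y : Fin (m + 1) => x ≠ y) k
        ≤ rpB (fun x y : Fin (m + 1) => x ≠ y) k := by
      rcases lt_or_gt_of_ne hk with hlt | hgt
      · cases k with
        | zero => exact redRpZ_le_rpB_zero (m + 1) 0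
        | succ j => exact redRpZ_le_rpB_succ (m + 1) j (by omega)
      · cases k with
        | zero => omega
        | succ j =>
          have hsub : redRpZ (fun x y : Fin (m + 1) => x ≠ y) (j + 1) ≤ ⊥ := by
            rw [redRpZ_ne_succ, supported_bot (by omega : m + 1 ≤ j + 1)]
            exact inf_le_left
          exact hsub.trans bot_le
    rw [Submodule.Quotient.subsingleton_iff, Submodule.comap_subtype_eq_top]
    exact hle
  · exact Module.Free.of_equiv equiv.symm
  · rw [equiv.finrank_eq, hzm]
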